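/- Let p₁ < p₂ be even elements of S, let ε > 0, and let μ be a Borel probability measure on [0,1] with ∫ |q − x| dμ(q) ≥ ε for all x ∈ [0,1]. Assume that lim_{N→∞} E⟨R_{1,2}^{p_i}⟩ = ∫ q^{p_i} dμ(q) for i = 1, 2. Then there exists δ' > 0 such that for all sufficiently large N, E⟨(R_{1,2} − E⟨R_{1,2}⟩)²⟩ ≥ δ'. -/

import Mathlib

open MeasureTheory ProbabilityTheory Real Filter Topology

noncomputable section

/-- The spin value `±1` attached to a Boolean. -/
def spin (b : Bool) : ℝ := if b then 1 else -1

/-- Index set for the Gaussian disorder: pairs `(p, (i_1, …, i_p))` with `p ∈ S` and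
`i_1, …, i_p ∈ {1, …, N}`. -/
abbrev DisorderIdx (S : Finset ℕ) (N : ℕ) := (p : {x // x ∈ S}) × (Fin (p : ℕ) → Fin N)

/-- The law of the disorder: i.i.d. standard Gaussian random variables `g^{(p)}_{i_1…i_p}`. -/
def disorder (S : Finset ℕ) (N : ℕ) : Measure (DisorderIdx S N → ℝ) :=
  Measure.pi fun _ => gaussianReal 0 1

/-- The mixed `p`-spin Hamiltonian
`H_N(σ) = Σ_{p∈S} β_p N^{-(p-1)/2} Σ_{i_1,…,i_p} g^{(p)}_{i_1…i_p} σ_{i_1} ⋯ σ_{i_p}`. -/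
def hamiltonian (S : Finset ℕ) (N : ℕ) (β : ℕ → ℝ) (g : DisorderIdx S N → ℝ)
    (σ : Fin N → Bool) : ℝ :=
  ∑ p : {x // x ∈ S}, β (p : ℕ) * (N : ℝ) ^ (-(((p : ℕ) : ℝ) - 1) / 2) *
    ∑ i : Fin (p : ℕ) → Fin N, g ⟨p, i⟩ * ∏ j, spin (σ (i j))

/-- The energy including the external field: `H_N(σ) + h Σ_i σ_i`. -/
def energy (S : Finset ℕ) (N : ℕ) (h : ℝ) (β : ℕ → ℝ) (g : DisorderIdx S N → ℝ)
    (σ : Fin N → Bool) : ℝ :=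
  hamiltonian S N β g σ + h * ∑ i, spin (σ i)

/-- The free energy `F_N(β) = N⁻¹ E log Σ_σ exp(H_N(σ) + h Σ_i σ_i)`. -/
def freeEnergy (S : Finset ℕ) (N : ℕ) (h : ℝ) (β : ℕ → ℝ) : ℝ :=
  (N : ℝ)⁻¹ *
    ∫ g, Real.log (∑ σ : Fin N → Bool, Real.exp (energy S N h β g σ)) ∂(disorder S N)

/-- The Gibbs measure `G(σ) = exp(H_N(σ) + h Σ_i σ_i) / Σ_τ exp(H_N(τ) + h Σ_i τ_i)`. -/
def gibbs (S : Finset ℕ) (N : ℕ) (h : ℝ) (β : ℕ → ℝ) (g : DisorderIdx S N → ℝ)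
    (σ : Fin N → Bool) : ℝ :=
  Real.exp (energy S N h β g σ) / ∑ τ : Fin N → Bool, Real.exp (energy S N h β g τ)

/-- The overlap `R_{1,2} = N⁻¹ Σ_{i ≤ N} σ¹_i σ²_i`. -/
def overlap (N : ℕ) (σ1 σ2 : Fin N → Bool) : ℝ :=
  (N : ℝ)⁻¹ * ∑ i, spin (σ1 i) * spin (σ2 i)

/-- Gibbs average `⟨f(σ¹,σ²)⟩` over two independent replicas from the Gibbs measure. -/
def gibbsAvg2 (S : Finset ℕ) (N : ℕ) (h : ℝ) (β : ℕ → ℝ) (g : DisorderIdx S N → ℝ)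
    (f : (Fin N → Bool) → (Fin N → Bool) → ℝ) : ℝ :=
  ∑ σ1 : Fin N → Bool, ∑ σ2 : Fin N → Bool, f σ1 σ2 * gibbs S N h β g σ1 * gibbs S N h β g σ2

/-- `E⟨R_{1,2}^p⟩`: expectation over the disorder of the Gibbs average of the `p`-th
power of the overlap. -/
def overlapMoment (S : Finset ℕ) (N : ℕ) (h : ℝ) (β : ℕ → ℝ) (p : ℕ) : ℝ :=
  ∫ g, gibbsAvg2 S N h β g (fun σ1 σ2 => overlap N σ1 σ2 ^ p) ∂(disorder S N)

namespace ONS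

instance (S : Finset ℕ) (N : ℕ) : IsProbabilityMeasure (disorder S N) := by
  unfold disorder; infer_instance

lemma abs_spin (b : Bool) : |spin b| = 1 := by cases b <;> simp [spin]

lemma abs_overlap_le (N : ℕ) (σ1 σ2 : Fin N → Bool) : |overlap N σ1 σ2| ≤ 1 := by
  rcases Nat.eq_zero_or_pos N with hN | hN
  · subst hN; simp [overlap]
  · have hN' : (0:ℝ) < N := by exact_mod_cast hN
    have h1 : |∑ i, spin (σ1 i) * spin (σ2 i)| ≤ (N : ℝ) := by
      calc |∑ i, spin (σ1 i) * spin (σ2 i)| ≤ ∑ i : Fin N, |spin (σ1 i) * spin (σ2 i)| :=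
            Finset.abs_sum_le_sum_abs _ _
        _ = ∑ _i : Fin N, (1:ℝ) := by simp [abs_mul, abs_spin]
        _ = (N:ℝ) := by simp
    rw [overlap, abs_mul, abs_of_nonneg (inv_nonneg.2 hN'.le)]
    calc (N:ℝ)⁻¹ * |∑ i, spin (σ1 i) * spin (σ2 i)| ≤ (N:ℝ)⁻¹ * N := by gcongr
      _ = 1 := inv_mul_cancel₀ hN'.ne'

variable {S : Finset ℕ} {N : ℕ} {h : ℝ} {β : ℕ → ℝ}

lemma Zpos (g : DisorderIdx S N → ℝ) :
    0 < ∑ τ : Fin N → Bool, Real.exp (energy S N h β g τ) :=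
  Finset.sum_pos (fun τ _ => Real.exp_pos _) ⟨fun _ => false, Finset.mem_univ _⟩

lemma gibbs_nonneg (g : DisorderIdx S N → ℝ) (σ : Fin N → Bool) :
    0 ≤ gibbs S N h β g σ := div_nonneg (Real.exp_pos _).le (Zpos g).le

lemma gibbs_sum_one (g : DisorderIdx S N → ℝ) :
    ∑ σ : Fin N → Bool, gibbs S N h β g σ = 1 := by
  simp only [gibbs]
  rw [← Finset.sum_div]
  exact div_self (Zpos g).ne'

lemma sum_weights (g : DisorderIdx S N → ℝ) :
    ∑ σ1 : Fin N → Bool, ∑ σ2 : Fin N → Bool, gibbs S N h β g σ1 * gibbs S N h β g σ2 = 1 := by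
  rw [← Finset.sum_mul_sum]
  simp [gibbs_sum_one]

lemma gibbsAvg2_smul_add_const (g : DisorderIdx S N → ℝ)
    (f : (Fin N → Bool) → (Fin N → Bool) → ℝ) (c d : ℝ) :
    gibbsAvg2 S N h β g (fun σ1 σ2 => c * f σ1 σ2 + d) = c * gibbsAvg2 S N h β g f + d := by
  have key : ∀ σ1 σ2 : Fin N → Bool,
      (c * f σ1 σ2 + d) * gibbs S N h β g σ1 * gibbs S N h β g σ2
      = c * (f σ1 σ2 * gibbs S N h β g σ1 * gibbs S N h β g σ2)
        + d * (gibbs S N h β g σ1 * gibbs S N h β g σ2) := by intros; ring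
  simp only [gibbsAvg2, key, Finset.sum_add_distrib]
  congr 1
  · simp_rw [← Finset.mul_sum]
  · simp only [← Finset.mul_sum]
    simp [gibbs_sum_one]

lemma gibbsAvg2_sub_const (g : DisorderIdx S N → ℝ)
    (f : (Fin N → Bool) → (Fin N → Bool) → ℝ) (d : ℝ) :
    gibbsAvg2 S N h β g (fun σ1 σ2 => f σ1 σ2 - d) = gibbsAvg2 S N h β g f - d := by
  have := gibbsAvg2_smul_add_const (S := S) (N := N) (h := h) (β := β) g f 1 (-d)
  simp only [one_mul] at this
  simpa [sub_eq_add_neg] using this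

lemma gibbsAvg2_const (g : DisorderIdx S N → ℝ) (d : ℝ) :
    gibbsAvg2 S N h β g (fun _ _ => d) = d := by
  have := gibbsAvg2_smul_add_const (S := S) (N := N) (h := h) (β := β) g (fun _ _ => 0) 0 d
  simpa using this

lemma abs_gibbsAvg2_le (g : DisorderIdx S N → ℝ)
    (f F : (Fin N → Bool) → (Fin N → Bool) → ℝ)
    (hF : ∀ σ1 σ2, |f σ1 σ2| ≤ F σ1 σ2) :
    |gibbsAvg2 S N h β g f| ≤ gibbsAvg2 S N h β g F := by
  calc |gibbsAvg2 S N h β g f|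
      ≤ ∑ σ1 : Fin N → Bool, |∑ σ2 : Fin N → Bool,
          f σ1 σ2 * gibbs S N h β g σ1 * gibbs S N h β g σ2| :=
        Finset.abs_sum_le_sum_abs _ _
    _ ≤ ∑ σ1 : Fin N → Bool, ∑ σ2 : Fin N → Bool,
          |f σ1 σ2 * gibbs S N h β g σ1 * gibbs S N h β g σ2| :=
        Finset.sum_le_sum fun σ1 _ => Finset.abs_sum_le_sum_abs _ _
    _ ≤ gibbsAvg2 S N h β g F := by
        apply Finset.sum_le_sum
        intro σ1 _
        apply Finset.sum_le_sum
        intro σ2 _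
        rw [abs_mul, abs_mul, abs_of_nonneg (gibbs_nonneg g σ1), abs_of_nonneg (gibbs_nonneg g σ2)]
        exact mul_le_mul_of_nonneg_right
          (mul_le_mul_of_nonneg_right (hF σ1 σ2) (gibbs_nonneg g σ1)) (gibbs_nonneg g σ2)

lemma abs_gibbsAvg2_le_const (g : DisorderIdx S N → ℝ)
    (f : (Fin N → Bool) → (Fin N → Bool) → ℝ) (C : ℝ)
    (hC : ∀ σ1 σ2, |f σ1 σ2| ≤ C) :
    |gibbsAvg2 S N h β g f| ≤ C := by
  have := abs_gibbsAvg2_le (S := S) (N := N) (h := h) (β := β) g f (fun _ _ => C) hC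
  rwa [gibbsAvg2_const] at this

lemma continuous_energy (σ : Fin N → Bool) :
    Continuous fun g : DisorderIdx S N → ℝ => energy S N h β g σ := by
  unfold energy hamiltonian
  refine Continuous.add ?_ continuous_const
  refine continuous_finset_sum _ fun p _ => ?_
  exact continuous_const.mul (continuous_finset_sum _ fun i _ =>
    (continuous_apply (⟨p, i⟩ : DisorderIdx S N)).mul continuous_const)

lemma continuous_gibbs (σ : Fin N → Bool) :
    Continuous fun g : DisorderIdx S N → ℝ => gibbs S N h β g σ := by
  unfold gibbs
  refine Continuous.div ?_ ?_ ?_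
  · exact Real.continuous_exp.comp (continuous_energy σ)
  · exact continuous_finset_sum _ fun τ _ => Real.continuous_exp.comp (continuous_energy τ)
  · exact fun g => (Zpos g).ne'

lemma continuous_gibbsAvg2 (f : (Fin N → Bool) → (Fin N → Bool) → ℝ) :
    Continuous fun g : DisorderIdx S N → ℝ => gibbsAvg2 S N h β g f := by
  unfold gibbsAvg2
  refine continuous_finset_sum _ fun σ1 _ => continuous_finset_sum _ fun σ2 _ => ?_
  exact ((continuous_const.mul (continuous_gibbs σ1)).mul (continuous_gibbs σ2))

lemma integrable_gibbsAvg2 (f : (Fin N → Bool) → (Fin N → Bool) → ℝ) (C : ℝ)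
    (hC : ∀ σ1 σ2, |f σ1 σ2| ≤ C) :
    Integrable (fun g => gibbsAvg2 S N h β g f) (disorder S N) := by
  refine Integrable.mono' (integrable_const C)
    (continuous_gibbsAvg2 f).aestronglyMeasurable ?_
  filter_upwards with g
  rw [Real.norm_eq_abs]
  exact abs_gibbsAvg2_le_const g f C hC

lemma abs_overlapMoment_le (S : Finset ℕ) (N : ℕ) (h : ℝ) (β : ℕ → ℝ) (p : ℕ) :
    |overlapMoment S N h β p| ≤ 1 := by
  have hb : ∀ g, ‖gibbsAvg2 S N h β g (fun σ1 σ2 => overlap N σ1 σ2 ^ p)‖ ≤ 1 := by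
    intro g
    rw [Real.norm_eq_abs]
    refine abs_gibbsAvg2_le_const g _ 1 fun σ1 σ2 => ?_
    rw [abs_pow]
    exact pow_le_one₀ (abs_nonneg _) (abs_overlap_le N σ1 σ2)
  have := norm_integral_le_of_norm_le_const (μ := disorder S N) (ae_of_all _ hb)
  rw [Real.norm_eq_abs] at this
  simpa [measure_univ, overlapMoment] using this


lemma abs_pow_sub_pow_le (x a : ℝ) (hx : |x| ≤ 1) (ha : |a| ≤ 1) (p : ℕ) :
    |x ^ p - a ^ p| ≤ p * |x - a| := by
  induction p with
  | zero => simp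
  | succ p ih =>
    have key : x ^ (p+1) - a ^ (p+1) = x * (x ^ p - a ^ p) + (x - a) * a ^ p := by ring
    have h1 : |x * (x ^ p - a ^ p)| ≤ p * |x - a| := by
      rw [abs_mul]
      calc |x| * |x ^ p - a ^ p| ≤ 1 * (p * |x - a|) :=
            mul_le_mul hx ih (abs_nonneg _) zero_le_one
        _ = p * |x - a| := one_mul _
    have h2 : |(x - a) * a ^ p| ≤ |x - a| := by
      rw [abs_mul, abs_pow]
      nlinarith [abs_nonneg (x - a), pow_le_one₀ (abs_nonneg a) ha (n := p),
        pow_nonneg (abs_nonneg a) p]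
    calc |x ^ (p+1) - a ^ (p+1)| ≤ |x * (x ^ p - a ^ p)| + |(x - a) * a ^ p| := by
          rw [key]; exact abs_add_le _ _
      _ ≤ p * |x - a| + |x - a| := add_le_add h1 h2
      _ = (p + 1 : ℕ) * |x - a| := by push_cast; ring

lemma abs_le_aux (u η : ℝ) (hη : 0 < η) : |u| ≤ (u ^ 2 + η ^ 2) / (2 * η) := by
  rw [le_div_iff₀ (by positivity)]
  rcases abs_cases u with ⟨h1, _⟩ | ⟨h1, _⟩ <;> nlinarith [sq_nonneg (u - η), sq_nonneg (u + η)]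

lemma key_ineq (m n : ℕ) (hm : 0 < m) (hmn : m < n) (s : ℝ) (hs : 0 < s)
    (x : ℝ) (hx : 0 ≤ x) (hxs : x ≠ s) :
    0 < (m : ℝ) * x ^ n + ((n : ℝ) - m) * s ^ n - n * s ^ (n - m) * x ^ m := by
  have hn : 0 < n := hm.trans hmn
  have hm0 : (0:ℝ) < m := by exact_mod_cast hm
  have hn0 : (0:ℝ) < n := by exact_mod_cast hn
  set c : ℝ := (n : ℝ) * s ^ (n - m) with hc
  set f : ℝ → ℝ := fun y => (m : ℝ) * y ^ n - c * y ^ m with hf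
  have hderiv : ∀ y : ℝ, HasDerivAt f ((m : ℝ) * (n * y ^ (n - 1)) - c * (m * y ^ (m - 1))) y :=
    fun y => ((hasDerivAt_pow n y).const_mul _).sub ((hasDerivAt_pow m y).const_mul _)
  have hcont : Continuous f := by
    simp only [hf]; fun_prop
  have hpow : s ^ (n - m) * s ^ m = s ^ n := pow_sub_mul_pow s hmn.le
  have main : f s < f x := by
    rcases lt_or_gt_of_ne hxs with hlt | hgt
    · have hanti : StrictAntiOn f (Set.Icc 0 s) := by
        apply strictAntiOn_of_deriv_neg (convex_Icc 0 s) hcont.continuousOn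
        intro y hy
        rw [interior_Icc] at hy
        rw [(hderiv y).deriv]
        have h1 : y ^ (n - 1) = y ^ (m - 1) * y ^ (n - m) := by
          rw [← pow_add]; congr 1; omega
        have h2 : y ^ (n - m) < s ^ (n - m) :=
          pow_lt_pow_left₀ hy.2 hy.1.le (by omega)
        have h3 : (0:ℝ) < y ^ (m - 1) := pow_pos hy.1 _
        rw [h1, hc]
        nlinarith [mul_pos (mul_pos hm0 hn0) (mul_pos h3 (sub_pos.2 h2))]
      exact hanti ⟨hx, hlt.le⟩ ⟨hs.le, le_rfl⟩ hlt
    · have hmono : StrictMonoOn f (Set.Ici s) := by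
        apply strictMonoOn_of_deriv_pos (convex_Ici s) hcont.continuousOn
        intro y hy
        rw [interior_Ici] at hy
        rw [(hderiv y).deriv]
        have hy0 : 0 < y := hs.trans hy
        have h1 : y ^ (n - 1) = y ^ (m - 1) * y ^ (n - m) := by
          rw [← pow_add]; congr 1; omega
        have h2 : s ^ (n - m) < y ^ (n - m) :=
          pow_lt_pow_left₀ hy hs.le (by omega)
        have h3 : (0:ℝ) < y ^ (m - 1) := pow_pos hy0 _
        rw [h1, hc]
        nlinarith [mul_pos (mul_pos hm0 hn0) (mul_pos h3 (sub_pos.2 h2))]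
      exact hmono Set.self_mem_Ici (Set.mem_Ici.2 hgt.le) hgt
  have hfs : f s = (m : ℝ) * s ^ n - (n : ℝ) * s ^ n := by
    simp only [hf, hc]
    rw [mul_assoc, hpow]
  simp only [hf, hc] at main ⊢
  nlinarith [main, hpow]


lemma momentA (p₁ p₂ : ℕ) (he₁ : Even p₁) (he₂ : Even p₂) (h1 : 0 < p₁) (hp₁₂ : p₁ < p₂)
    (ε : ℝ) (hε : 0 < ε) (μ : Measure ℝ) [IsProbabilityMeasure μ]
    (hsupp : μ (Set.Icc (0 : ℝ) 1)ᶜ = 0)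
    (hsep : ∀ x ∈ Set.Icc (0 : ℝ) 1, ε ≤ ∫ q, |q - x| ∂μ)
    (t : ℝ) (ht : |t| ≤ 1)
    (h₁ : ∫ q, q ^ p₁ ∂μ = t ^ p₁) (h₂ : ∫ q, q ^ p₂ ∂μ = t ^ p₂) : False := by
  have hae : ∀ᵐ q ∂μ, q ∈ Set.Icc (0 : ℝ) 1 := mem_ae_iff.mpr hsupp
  have hint : ∀ n : ℕ, Integrable (fun q => q ^ n) μ := by
    intro n
    refine Integrable.mono' (integrable_const 1) (continuous_pow n).aestronglyMeasurable ?_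
    filter_upwards [hae] with q hq
    rw [Real.norm_eq_abs, abs_pow]
    exact pow_le_one₀ (abs_nonneg q) (abs_le.2 ⟨by linarith [hq.1], hq.2⟩)
  set s := |t| with hsdef
  have hs0 : 0 ≤ s := abs_nonneg t
  have hs1 : s ≤ 1 := ht
  have ht₁ : t ^ p₁ = s ^ p₁ := (he₁.pow_abs t).symm
  have ht₂ : t ^ p₂ = s ^ p₂ := (he₂.pow_abs t).symm
  have hzero : ∀ x ∈ Set.Icc (0:ℝ) 1, (∀ᵐ q ∂μ, q = x) → False := by
    intro x hxm hq
    have h0 : ∫ q, |q - x| ∂μ = 0 := by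
      have : ∫ q, |q - x| ∂μ = ∫ _q, (0 : ℝ) ∂μ := by
        refine integral_congr_ae ?_
        filter_upwards [hq] with q hq'
        simp [hq']
      rw [this, integral_zero]
    linarith [hsep x hxm]
  rcases eq_or_lt_of_le hs0 with hs | hs
  · -- s = 0, hence t = 0 and q = 0 a.e.
    have ht0 : t = 0 := abs_eq_zero.1 hs.symm
    have h₁0 : ∫ q, q ^ p₁ ∂μ = 0 := by rw [h₁, ht0, zero_pow h1.ne']
    have hnn : 0 ≤ fun q : ℝ => q ^ p₁ := fun q => he₁.pow_nonneg q
    have heq : (fun q : ℝ => q ^ p₁) =ᵐ[μ] 0 :=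
      (integral_eq_zero_iff_of_nonneg hnn (hint p₁)).1 h₁0
    refine hzero 0 (by norm_num) ?_
    filter_upwards [heq] with q hq
    exact pow_eq_zero_iff h1.ne' |>.1 hq
  · -- s > 0
    set Ψ : ℝ → ℝ := fun q =>
      (p₁ : ℝ) * q ^ p₂ + ((p₂ : ℝ) - p₁) * s ^ p₂ - p₂ * s ^ (p₂ - p₁) * q ^ p₁ with hΨ
    have habs : ∀ q : ℝ, Ψ q =
        (p₁ : ℝ) * |q| ^ p₂ + ((p₂ : ℝ) - p₁) * s ^ p₂ - p₂ * s ^ (p₂ - p₁) * |q| ^ p₁ := by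
      intro q
      simp only [hΨ, he₁.pow_abs, he₂.pow_abs]
    have hΨnn : ∀ q : ℝ, 0 ≤ Ψ q := by
      intro q
      rcases eq_or_ne |q| s with hqs | hqs
      · rw [habs q, hqs]
        have := pow_sub_mul_pow s hp₁₂.le
        nlinarith [this]
      · exact le_of_lt (by
          rw [habs q]
          exact key_ineq p₁ p₂ h1 hp₁₂ s hs |q| (abs_nonneg q) hqs)
    have hΨeq : ∀ q : ℝ, Ψ q = 0 → |q| = s := by
      intro q hq
      by_contra hqs
      have := key_ineq p₁ p₂ h1 hp₁₂ s hs |q| (abs_nonneg q) hqs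
      rw [← habs q] at this
      linarith
    have hΨint : Integrable Ψ μ := by
      refine Integrable.sub (Integrable.add ((hint p₂).const_mul _) (integrable_const _))
        ((hint p₁).const_mul _)
    have hΨ0 : ∫ q, Ψ q ∂μ = 0 := by
      simp only [hΨ]
      have hA1 : Integrable (fun q : ℝ => (p₁ : ℝ) * q ^ p₂) μ := (hint p₂).const_mul _
      have hA2 : Integrable (fun _ : ℝ => ((p₂ : ℝ) - p₁) * s ^ p₂) μ := integrable_const _
      have hB : Integrable (fun q : ℝ => (p₂ : ℝ) * s ^ (p₂ - p₁) * q ^ p₁) μ :=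
        (hint p₁).const_mul _
      have hA : Integrable (fun q : ℝ => (p₁ : ℝ) * q ^ p₂ + ((p₂ : ℝ) - p₁) * s ^ p₂) μ :=
        hA1.add hA2
      rw [integral_sub hA hB, integral_add hA1 hA2, integral_const_mul,
        integral_const_mul, integral_const_mul, integral_const, h₁, h₂, ht₁, ht₂]
      have hpow : s ^ (p₂ - p₁) * s ^ p₁ = s ^ p₂ := pow_sub_mul_pow s hp₁₂.le
      simp only [measure_univ, ENNReal.toReal_one, smul_eq_mul, one_mul, probReal_univ]
      rw [mul_assoc, hpow]
      ring
    have heq : Ψ =ᵐ[μ] 0 := (integral_eq_zero_iff_of_nonneg (fun q => hΨnn q) hΨint).1 hΨ0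
    refine hzero s ⟨hs0, hs1⟩ ?_
    filter_upwards [heq, hae] with q h0 hq
    have : |q| = s := hΨeq q h0
    rw [← this, abs_of_nonneg hq.1]


lemma moment_dev_bound (S : Finset ℕ) (N : ℕ) (h : ℝ) (β : ℕ → ℝ) (p : ℕ) (η : ℝ)
    (hη : 0 < η) :
    |overlapMoment S N h β p - (overlapMoment S N h β 1) ^ p|
      ≤ (p : ℝ) * ((∫ g, gibbsAvg2 S N h β g
            (fun σ1 σ2 => (overlap N σ1 σ2 - overlapMoment S N h β 1) ^ 2) ∂(disorder S N))
          + η ^ 2) / (2 * η) := by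
  set a := overlapMoment S N h β 1 with hadef
  have ha : |a| ≤ 1 := abs_overlapMoment_le S N h β 1
  have hsq : ∀ σ1 σ2 : Fin N → Bool, |(overlap N σ1 σ2 - a) ^ 2| ≤ 4 := by
    intro σ1 σ2
    have h1 := abs_le.1 (abs_overlap_le N σ1 σ2)
    have h2 := abs_le.1 ha
    rw [abs_of_nonneg (sq_nonneg _)]
    nlinarith [h1.1, h1.2, h2.1, h2.2]
  have hpt : ∀ g, |gibbsAvg2 S N h β g (fun σ1 σ2 => overlap N σ1 σ2 ^ p) - a ^ p|
      ≤ (p : ℝ) / (2 * η) * gibbsAvg2 S N h β g (fun σ1 σ2 => (overlap N σ1 σ2 - a) ^ 2)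
        + (p : ℝ) * η ^ 2 / (2 * η) := by
    intro g
    rw [← gibbsAvg2_sub_const g _ (a ^ p)]
    have hb := abs_gibbsAvg2_le (S := S) (N := N) (h := h) (β := β) g
      (fun σ1 σ2 => overlap N σ1 σ2 ^ p - a ^ p)
      (fun σ1 σ2 => (p : ℝ) / (2 * η) * (overlap N σ1 σ2 - a) ^ 2 + (p : ℝ) * η ^ 2 / (2 * η))
      (by
        intro σ1 σ2
        have h1 := abs_pow_sub_pow_le (overlap N σ1 σ2) a (abs_overlap_le N σ1 σ2) ha p
        have h2 := abs_le_aux (overlap N σ1 σ2 - a) η hη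
        have hp0 : (0 : ℝ) ≤ p := Nat.cast_nonneg p
        calc |overlap N σ1 σ2 ^ p - a ^ p| ≤ p * |overlap N σ1 σ2 - a| := h1
          _ ≤ p * (((overlap N σ1 σ2 - a) ^ 2 + η ^ 2) / (2 * η)) :=
              mul_le_mul_of_nonneg_left h2 hp0
          _ = (p : ℝ) / (2 * η) * (overlap N σ1 σ2 - a) ^ 2 + (p : ℝ) * η ^ 2 / (2 * η) := by
              field_simp)
    rwa [gibbsAvg2_smul_add_const] at hb
  have hint1 : Integrable (fun g => gibbsAvg2 S N h β g (fun σ1 σ2 => overlap N σ1 σ2 ^ p))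
      (disorder S N) := by
    refine integrable_gibbsAvg2 _ 1 fun σ1 σ2 => ?_
    rw [abs_pow]
    exact pow_le_one₀ (abs_nonneg _) (abs_overlap_le N σ1 σ2)
  have hintV : Integrable
      (fun g => gibbsAvg2 S N h β g (fun σ1 σ2 => (overlap N σ1 σ2 - a) ^ 2))
      (disorder S N) := integrable_gibbsAvg2 _ 4 hsq
  have hintD : Integrable
      (fun g => gibbsAvg2 S N h β g (fun σ1 σ2 => overlap N σ1 σ2 ^ p) - a ^ p)
      (disorder S N) := hint1.sub (integrable_const _)
  have step1 : overlapMoment S N h β p - a ^ p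
      = ∫ g, (gibbsAvg2 S N h β g (fun σ1 σ2 => overlap N σ1 σ2 ^ p) - a ^ p)
          ∂(disorder S N) := by
    rw [integral_sub hint1 (integrable_const _), integral_const]
    simp [overlapMoment, measure_univ]
  rw [step1]
  calc |∫ g, (gibbsAvg2 S N h β g (fun σ1 σ2 => overlap N σ1 σ2 ^ p) - a ^ p) ∂(disorder S N)|
      ≤ ∫ g, |gibbsAvg2 S N h β g (fun σ1 σ2 => overlap N σ1 σ2 ^ p) - a ^ p| ∂(disorder S N) :=
        by
          have := norm_integral_le_integral_norm (μ := disorder S N)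
            (f := fun g => gibbsAvg2 S N h β g (fun σ1 σ2 => overlap N σ1 σ2 ^ p) - a ^ p)
          simpa [Real.norm_eq_abs] using this
    _ ≤ ∫ g, ((p : ℝ) / (2 * η) * gibbsAvg2 S N h β g (fun σ1 σ2 => (overlap N σ1 σ2 - a) ^ 2)
          + (p : ℝ) * η ^ 2 / (2 * η)) ∂(disorder S N) := by
        refine integral_mono hintD.abs ((hintV.const_mul _).add (integrable_const _)) ?_
        intro g
        exact hpt g
    _ = (p : ℝ) / (2 * η) * (∫ g, gibbsAvg2 S N h β g
          (fun σ1 σ2 => (overlap N σ1 σ2 - a) ^ 2) ∂(disorder S N))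
        + (p : ℝ) * η ^ 2 / (2 * η) := by
        rw [integral_add (hintV.const_mul _) (integrable_const _), integral_const_mul,
          integral_const]
        simp [measure_univ]
    _ = (p : ℝ) * ((∫ g, gibbsAvg2 S N h β g
          (fun σ1 σ2 => (overlap N σ1 σ2 - a) ^ 2) ∂(disorder S N)) + η ^ 2) / (2 * η) := by
        ring
end ONS

/-- Let `p₁ < p₂` be even elements of `S`, `ε > 0`, and let `μ` be a Borel probability
measure on `[0,1]` with `∫ |q - x| dμ(q) ≥ ε` for all `x ∈ [0,1]`. If
`E⟨R_{1,2}^{p_i}⟩ → ∫ q^{p_i} dμ` for `i = 1, 2`, then there is a `δ' > 0` such that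
for all sufficiently large `N`, `E⟨(R_{1,2} - E⟨R_{1,2}⟩)²⟩ ≥ δ'`. -/
theorem overlap_not_self_averaging
    (S : Finset ℕ) (hS : ∀ p ∈ S, 0 < p) (h : ℝ) (β : ℕ → ℝ)
    (p₁ p₂ : ℕ) (hp₁ : p₁ ∈ S) (hp₂ : p₂ ∈ S)
    (he₁ : Even p₁) (he₂ : Even p₂) (hp₁₂ : p₁ < p₂)
    (ε : ℝ) (hε : 0 < ε)
    (μ : Measure ℝ) (hμ : IsProbabilityMeasure μ) (hsupp : μ (Set.Icc (0 : ℝ) 1)ᶜ = 0)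
    (hsep : ∀ x ∈ Set.Icc (0 : ℝ) 1, ε ≤ ∫ q, |q - x| ∂μ)
    (hlim1 : Tendsto (fun N => overlapMoment S N h β p₁) atTop (𝓝 (∫ q, q ^ p₁ ∂μ)))
    (hlim2 : Tendsto (fun N => overlapMoment S N h β p₂) atTop (𝓝 (∫ q, q ^ p₂ ∂μ))) :
    ∃ δ' > (0 : ℝ), ∃ N₀ : ℕ, ∀ N ≥ N₀,
      δ' ≤ ∫ g, gibbsAvg2 S N h β g
          (fun σ1 σ2 => (overlap N σ1 σ2 - overlapMoment S N h β 1) ^ 2)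
        ∂(disorder S N) := by
  haveI := hμ
  have hp1pos : 0 < p₁ := hS p₁ hp₁
  set m₁ := ∫ q, q ^ p₁ ∂μ with hm₁
  set m₂ := ∫ q, q ^ p₂ ∂μ with hm₂
  clear_value m₁ m₂
  set Φ : ℝ → ℝ := fun t => |m₁ - t ^ p₁| + |m₂ - t ^ p₂| with hΦ
  have hΦc : Continuous Φ :=
    ((continuous_const.sub (continuous_pow p₁)).abs).add
      ((continuous_const.sub (continuous_pow p₂)).abs)
  obtain ⟨t₀, ht₀, hmin⟩ := (isCompact_Icc (a := (-1 : ℝ)) (b := 1)).exists_isMinOn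
    ⟨0, by norm_num⟩ hΦc.continuousOn
  set δ := Φ t₀ with hδdef
  have hδeq : δ = |m₁ - t₀ ^ p₁| + |m₂ - t₀ ^ p₂| := by rw [hδdef]
  clear_value δ
  have hδpos : 0 < δ := by
    rcases lt_or_eq_of_le (show (0:ℝ) ≤ δ by rw [hδeq]; positivity) with h' | h'
    · exact h'
    · exfalso
      have hn1 := abs_nonneg (m₁ - t₀ ^ p₁)
      have hn2 := abs_nonneg (m₂ - t₀ ^ p₂)
      have h0a : |m₁ - t₀ ^ p₁| = 0 := by linarith [hδeq, h'.symm ▸ hδeq]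
      have h0b : |m₂ - t₀ ^ p₂| = 0 := by linarith [hδeq, h'.symm ▸ hδeq]
      have e1 : m₁ = t₀ ^ p₁ := by have := abs_eq_zero.1 h0a; linarith
      have e2 : m₂ = t₀ ^ p₂ := by have := abs_eq_zero.1 h0b; linarith
      exact ONS.momentA p₁ p₂ he₁ he₂ hp1pos hp₁₂ ε hε μ hsupp hsep t₀
        (abs_le.2 ⟨ht₀.1, ht₀.2⟩) (by rw [← hm₁]; exact e1) (by rw [← hm₂]; exact e2)
  set P := (p₁ : ℝ) + (p₂ : ℝ) with hP
  have hPpos : 0 < P := by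
    have h1 : (0 : ℝ) < p₁ := by exact_mod_cast hp1pos
    have h2 : (0 : ℝ) ≤ p₂ := Nat.cast_nonneg p₂
    rw [hP]; linarith
  set η := δ / (2 * P) with hηdef
  have hηpos : 0 < η := by rw [hηdef]; positivity
  have hPη : 2 * P * η = δ := by rw [hηdef]; field_simp
  clear_value P η
  obtain ⟨N₁, hN₁⟩ := Metric.tendsto_atTop.1 hlim1 (δ / 8) (by positivity)
  obtain ⟨N₂, hN₂⟩ := Metric.tendsto_atTop.1 hlim2 (δ / 8) (by positivity)
  refine ⟨δ ^ 2 / (2 * P ^ 2), by positivity, max N₁ N₂, ?_⟩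
  intro N hN
  have key₁ := ONS.moment_dev_bound S N h β p₁ η hηpos
  have key₂ := ONS.moment_dev_bound S N h β p₂ η hηpos
  have e₁ : |overlapMoment S N h β p₁ - m₁| < δ / 8 := by
    have := hN₁ N (le_trans (le_max_left _ _) hN); rwa [Real.dist_eq] at this
  have e₂ : |overlapMoment S N h β p₂ - m₂| < δ / 8 := by
    have := hN₂ N (le_trans (le_max_right _ _) hN); rwa [Real.dist_eq] at this
  set a := overlapMoment S N h β 1 with hadef
  have hamem : a ∈ Set.Icc (-1 : ℝ) 1 := by
    have h1 := ONS.abs_overlapMoment_le S N h β 1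
    rw [← hadef] at h1
    have := abs_le.1 h1
    exact ⟨this.1, this.2⟩
  clear_value a
  set V := ∫ g, gibbsAvg2 S N h β g
      (fun σ1 σ2 => (overlap N σ1 σ2 - a) ^ 2) ∂(disorder S N) with hVdef
  clear_value V
  have hΦa : δ ≤ |m₁ - a ^ p₁| + |m₂ - a ^ p₂| := by
    have h1 := isMinOn_iff.1 hmin a hamem
    rw [← hδdef] at h1
    simpa [hΦ] using h1
  have tri₁ : |m₁ - a ^ p₁| ≤ |m₁ - overlapMoment S N h β p₁|
      + |overlapMoment S N h β p₁ - a ^ p₁| := abs_sub_le _ _ _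
  have tri₂ : |m₂ - a ^ p₂| ≤ |m₂ - overlapMoment S N h β p₂|
      + |overlapMoment S N h β p₂ - a ^ p₂| := abs_sub_le _ _ _
  have b1 : |m₁ - overlapMoment S N h β p₁| < δ / 8 := by rw [abs_sub_comm]; exact e₁
  have b2 : |m₂ - overlapMoment S N h β p₂| < δ / 8 := by rw [abs_sub_comm]; exact e₂
  have hs : 3 * δ / 4 ≤ |overlapMoment S N h β p₁ - a ^ p₁|
      + |overlapMoment S N h β p₂ - a ^ p₂| := by linarith
  have hsum : |overlapMoment S N h β p₁ - a ^ p₁| + |overlapMoment S N h β p₂ - a ^ p₂|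
      ≤ P * (V + η ^ 2) / (2 * η) := by
    have hrw : (p₁ : ℝ) * (V + η ^ 2) / (2 * η) + (p₂ : ℝ) * (V + η ^ 2) / (2 * η)
        = P * (V + η ^ 2) / (2 * η) := by rw [hP]; ring
    linarith [key₁, key₂]
  have h10 : 3 * δ / 4 ≤ P * (V + η ^ 2) / (2 * η) := le_trans hs hsum
  have h9 : (3 * δ / 4) * (2 * η) ≤ P * (V + η ^ 2) := by
    calc (3 * δ / 4) * (2 * η) ≤ (P * (V + η ^ 2) / (2 * η)) * (2 * η) :=
          mul_le_mul_of_nonneg_right h10 (by positivity)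
      _ = P * (V + η ^ 2) := by field_simp
  rw [div_le_iff₀ (show (0 : ℝ) < 2 * P ^ 2 by nlinarith [hPpos])]
  rw [← hPη] at h9 ⊢
  nlinarith [h9, hPpos, hηpos]
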